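/- Let q be a prime, p₁ < p₂ positive integers with p₁ + p₂ = q and gcd(p₁,p₂) = 1, and let k ≥ 2 be an integer not divisible by q with p₁k < q < p₂k. For the numerical monoid S_k = ⟨p₁k, q, p₂k⟩ one has ω(S_k) = max{k, p₂+1} and t(S_k) = k + p₂ − 1. In particular, if k ≥ p₂ + 1, then ω(S_k) < t(S_k) and 1 < t(S_k)/ω(S_k) = 1 + (p₂−1)/k < 2. -/

import Mathlib

open scoped BigOperators

/-- `u` divides `x` in the additive submonoid of `ℕ` generated by `A`. -/
def dvdIn (A : Set ℕ) (u x : ℕ) : Prop :=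
  ∃ c ∈ AddSubmonoid.closure A, u + c = x

/-- `ω(S,u)` for the numerical monoid `S` generated by `A`: the smallest `N` such that
whenever `u` divides (in `S`) a sum of elements of `S`, it divides a subsum of at most
`N` of the summands. -/
noncomputable def omegaNum (A : Set ℕ) (u : ℕ) : ℕ∞ :=
  sInf {N : ℕ∞ | ∀ (n : ℕ) (a : Fin n → ℕ), (∀ i, a i ∈ AddSubmonoid.closure A) →
    dvdIn A u (∑ i, a i) →
    ∃ Ω : Finset (Fin n), (Ω.card : ℕ∞) ≤ N ∧ dvdIn A u (∑ i ∈ Ω, a i)}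

/-- `ω(S)`: the supremum over the atoms (here: the generators in `A`). -/
noncomputable def omegaNumS (A : Set ℕ) : ℕ∞ :=
  ⨆ u ∈ A, omegaNum A u

/-- `z` is a factorization of `a`: a multiset of generators summing to `a`. -/
def NumFact (A : Set ℕ) (a : ℕ) (z : Multiset ℕ) : Prop :=
  (∀ v ∈ z, v ∈ A) ∧ z.sum = a

/-- Distance between factorizations. -/
def numDist (z z' : Multiset ℕ) : ℕ :=
  max (Multiset.card (z - z')) (Multiset.card (z' - z))

/-- The tame degree `t(a,u)` in the numerical monoid generated by `A`. -/
noncomputable def tameNum (A : Set ℕ) (a u : ℕ) : ℕ∞ :=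
  sInf {N : ℕ∞ | ∀ z : Multiset ℕ, NumFact A a z →
    (∃ z₀ : Multiset ℕ, NumFact A a z₀ ∧ u ∈ z₀) →
    ∃ z' : Multiset ℕ, NumFact A a z' ∧ u ∈ z' ∧ (numDist z z' : ℕ∞) ≤ N}

/-- The tame degree `t(S)` of the numerical monoid generated by `A`. -/
noncomputable def tameNumS (A : Set ℕ) : ℕ∞ :=
  ⨆ u ∈ A, ⨆ a : ℕ, tameNum A a u


namespace OTAux



lemma keyZ {q k : ℕ} (hq : q.Prime) (hknd : ¬ q ∣ k) (D y : ℤ)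
    (h : (k:ℤ) * D = y * q) : ∃ m : ℤ, D = m * q ∧ y = (k:ℤ) * m := by
  have hqZ : Prime (q:ℤ) := Nat.prime_iff_prime_int.mp hq
  have hqk : ¬ (q:ℤ) ∣ (k:ℤ) := by
    intro hd
    exact hknd (Int.ofNat_dvd.mp hd)
  have hdvd : (q:ℤ) ∣ (k:ℤ) * D := ⟨y, by linarith⟩
  have hD : (q:ℤ) ∣ D := (hqZ.dvd_mul.mp hdvd).resolve_left hqk
  obtain ⟨m, rfl⟩ := hD
  have hq0 : (q:ℤ) ≠ 0 := by exact_mod_cast hq.ne_zero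
  refine ⟨m, by ring, ?_⟩
  have : y * q = ((k:ℤ) * m) * q := by ring_nf; ring_nf at h; linarith
  exact mul_right_cancel₀ hq0 this

lemma multGe {p₁ p₂ : ℕ} (hcop : Nat.gcd p₁ p₂ = 1) (hp1 : 0 < p₁) (hp2 : 0 < p₂)
    (a b : ℤ) (h : a * p₁ = b * p₂) (hb : 0 < b) : (p₂:ℤ) ≤ a := by
  have hcop' : IsCoprime (p₂:ℤ) (p₁:ℤ) :=
    Nat.isCoprime_iff_coprime.mpr (Nat.coprime_comm.mp hcop)
  have hp1' : (0:ℤ) < p₁ := by exact_mod_cast hp1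
  have hp2' : (0:ℤ) < p₂ := by exact_mod_cast hp2
  have hpa : 0 < a := by nlinarith
  have hdvd : (p₂:ℤ) ∣ (p₁:ℤ) * a := ⟨b, by linarith⟩
  exact Int.le_of_dvd hpa (hcop'.dvd_of_dvd_mul_left hdvd)

section Lemmas

variable {q p₁ p₂ k : ℕ} (hq : q.Prime) (hsum : p₁ + p₂ = q)
  (hcop : Nat.gcd p₁ p₂ = 1) (hknd : ¬ q ∣ k)
  (hp1 : 0 < p₁) (hp2 : 0 < p₂) (hk : 0 < k)

include hq hsum hcop hknd hp1 hp2 hk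

lemma L2 (a x y w : ℕ) (ha : a ≤ p₂)
    (h : a*(p₁*k) = q + (x*(p₁*k)+y*q+w*(p₂*k))) : False := by
  have hsZ : (p₁:ℤ) + p₂ = q := by exact_mod_cast hsum
  have hkZ : (0:ℤ) < k := by exact_mod_cast hk
  have hz : (k:ℤ) * ((a:ℤ)*p₁ - x*p₁ - w*p₂) = ((y:ℤ)+1)*q := by
    zify at h; linear_combination h
  obtain ⟨m, hD, hym⟩ := keyZ hq hknd _ _ hz
  have hm1 : 1 ≤ m := by by_contra hc; push_neg at hc; nlinarith
  have heq2 : ((a:ℤ) - x - m) * p₁ = ((w:ℤ) + m) * p₂ := by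
    linear_combination hD - m*hsZ
  have hwm : (0:ℤ) < (w:ℤ) + m := by
    have : (0:ℤ) ≤ (w:ℤ) := by exact_mod_cast Nat.zero_le w
    linarith
  have hle := multGe hcop hp1 hp2 _ _ heq2 hwm
  have haZ : (a:ℤ) ≤ p₂ := by exact_mod_cast ha
  have hxZ : (0:ℤ) ≤ (x:ℤ) := by exact_mod_cast Nat.zero_le x
  linarith

lemma L2' (c x y w : ℕ) (hc : c ≤ p₁)
    (h : c*(p₂*k) = q + (x*(p₁*k)+y*q+w*(p₂*k))) : False := by
  have hsZ : (p₁:ℤ) + p₂ = q := by exact_mod_cast hsum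
  have hkZ : (0:ℤ) < k := by exact_mod_cast hk
  have hz : (k:ℤ) * ((c:ℤ)*p₂ - w*p₂ - x*p₁) = ((y:ℤ)+1)*q := by
    zify at h; linear_combination h
  obtain ⟨m, hD, hym⟩ := keyZ hq hknd _ _ hz
  have hm1 : 1 ≤ m := by by_contra hcon; push_neg at hcon; nlinarith
  have heq2 : ((c:ℤ) - w - m) * p₂ = ((x:ℤ) + m) * p₁ := by
    linear_combination hD - m*hsZ
  have hxm : (0:ℤ) < (x:ℤ) + m := by
    have : (0:ℤ) ≤ (x:ℤ) := by exact_mod_cast Nat.zero_le x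
    linarith
  have hcop' : Nat.gcd p₂ p₁ = 1 := by rwa [Nat.gcd_comm]
  have hle := multGe hcop' hp2 hp1 _ _ heq2 hxm
  have hcZ : (c:ℤ) ≤ p₁ := by exact_mod_cast hc
  have hwZ : (0:ℤ) ≤ (w:ℤ) := by exact_mod_cast Nat.zero_le w
  linarith

lemma L1 (y w x' y' w' : ℕ)
    (h : y*q + w*(p₂*k) = p₁*k + (x'*(p₁*k)+y'*q+w'*(p₂*k))) : k ≤ y ∨ p₁ ≤ w := by
  have hsZ : (p₁:ℤ) + p₂ = q := by exact_mod_cast hsum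
  have hkZ : (0:ℤ) < k := by exact_mod_cast hk
  have hz : (k:ℤ) * ((1+(x':ℤ))*p₁ + (w':ℤ)*p₂ - (w:ℤ)*p₂) = ((y:ℤ) - y')*q := by
    zify at h; linear_combination -h
  obtain ⟨m, hD, hym⟩ := keyZ hq hknd _ _ hz
  rcases le_or_gt 1 m with hm | hm
  · left
    have hy'Z : (0:ℤ) ≤ (y':ℤ) := by exact_mod_cast Nat.zero_le y'
    have : (k:ℤ) ≤ (y:ℤ) := by nlinarith
    exact_mod_cast this
  · right
    have hm0 : m ≤ 0 := by linarith
    have heq2 : ((w:ℤ) - w' + m) * p₂ = (1 + (x':ℤ) - m) * p₁ := by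
      linear_combination -hD + m*hsZ
    have hx'Z : (0:ℤ) ≤ (x':ℤ) := by exact_mod_cast Nat.zero_le x'
    have hb : (0:ℤ) < 1 + (x':ℤ) - m := by linarith
    have hcop' : Nat.gcd p₂ p₁ = 1 := by rwa [Nat.gcd_comm]
    have hle := multGe hcop' hp2 hp1 _ _ heq2 hb
    have hw'Z : (0:ℤ) ≤ (w':ℤ) := by exact_mod_cast Nat.zero_le w'
    have : (p₁:ℤ) ≤ (w:ℤ) := by linarith
    exact_mod_cast this

lemma L3 (x y x' y' w' : ℕ)
    (h : x*(p₁*k) + y*q = p₂*k + (x'*(p₁*k)+y'*q+w'*(p₂*k))) : k ≤ y ∨ p₂ ≤ x := by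
  have hsZ : (p₁:ℤ) + p₂ = q := by exact_mod_cast hsum
  have hkZ : (0:ℤ) < k := by exact_mod_cast hk
  have hz : (k:ℤ) * ((x:ℤ)*p₁ - (x':ℤ)*p₁ - (1+(w':ℤ))*p₂) = ((y':ℤ) - y)*q := by
    zify at h; linear_combination h
  obtain ⟨m, hD, hym⟩ := keyZ hq hknd _ _ hz
  rcases le_or_gt 0 m with hm | hm
  · right
    have heq2 : ((x:ℤ) - x' - m) * p₁ = (1 + (w':ℤ) + m) * p₂ := by
      linear_combination hD - m*hsZ
    have hw'Z : (0:ℤ) ≤ (w':ℤ) := by exact_mod_cast Nat.zero_le w'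
    have hb : (0:ℤ) < 1 + (w':ℤ) + m := by linarith
    have hle := multGe hcop hp1 hp2 _ _ heq2 hb
    have hx'Z : (0:ℤ) ≤ (x':ℤ) := by exact_mod_cast Nat.zero_le x'
    have : (p₂:ℤ) ≤ (x:ℤ) := by linarith
    exact_mod_cast this
  · left
    have hmm : m ≤ -1 := by linarith
    have hy'Z : (0:ℤ) ≤ (y':ℤ) := by exact_mod_cast Nat.zero_le y'
    have : (k:ℤ) ≤ (y:ℤ) := by nlinarith
    exact_mod_cast this

lemma Uniq (x y w : ℕ) (hy : 1 ≤ y)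
    (h : x*(p₁*k)+y*q+w*(p₂*k) = (p₁+1)*(p₂*k)) : x = p₂ - 1 ∧ y = k ∧ w = 0 := by
  have hsZ : (p₁:ℤ) + p₂ = q := by exact_mod_cast hsum
  have hkZ : (0:ℤ) < k := by exact_mod_cast hk
  have hyZ : (1:ℤ) ≤ (y:ℤ) := by exact_mod_cast hy
  have hz : (k:ℤ) * (((p₁:ℤ)+1)*p₂ - (x:ℤ)*p₁ - (w:ℤ)*p₂) = (y:ℤ)*q := by
    zify at h; linear_combination -h
  obtain ⟨m, hD, hym⟩ := keyZ hq hknd _ _ hz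
  have hm1 : 1 ≤ m := by by_contra hcon; push_neg at hcon; nlinarith
  have heq2 : ((p₁:ℤ) + 1 - w - m) * p₂ = ((x:ℤ) + m) * p₁ := by
    linear_combination hD - m*hsZ
  have hxZ : (0:ℤ) ≤ (x:ℤ) := by exact_mod_cast Nat.zero_le x
  have hwZ : (0:ℤ) ≤ (w:ℤ) := by exact_mod_cast Nat.zero_le w
  have hb : (0:ℤ) < (x:ℤ) + m := by linarith
  have hcop' : Nat.gcd p₂ p₁ = 1 := by rwa [Nat.gcd_comm]
  have hle := multGe hcop' hp2 hp1 _ _ heq2 hb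
  -- p₁ ≤ p₁ + 1 - w - m, so w + m ≤ 1, hence m = 1 and w = 0
  have hm : m = 1 := by linarith
  have hw : (w:ℤ) = 0 := by linarith
  have hwN : w = 0 := by exact_mod_cast hw
  have hyN : y = k := by
    have : (y:ℤ) = (k:ℤ) := by rw [hym, hm, mul_one]
    exact_mod_cast this
  have hp1Z : ((p₁:ℤ)) ≠ 0 := by positivity
  have hx : (p₂:ℤ) = (x:ℤ) + 1 := by
    have h3 : (p₂:ℤ) * p₁ = ((x:ℤ) + 1) * p₁ := by
      rw [hm, hw] at heq2; linear_combination heq2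
    exact mul_right_cancel₀ hp1Z h3
  have hxN : p₂ = x + 1 := by exact_mod_cast hx
  exact ⟨by omega, hyN, hwN⟩

end Lemmas


lemma mem_closure_iff (n1 n2 n3 m : ℕ) :
    m ∈ AddSubmonoid.closure ({n1, n2, n3} : Set ℕ) ↔
      ∃ x y w : ℕ, m = x*n1 + y*n2 + w*n3 := by
  constructor
  · intro h
    induction h using AddSubmonoid.closure_induction with
    | mem v hv =>
      simp only [Set.mem_insert_iff, Set.mem_singleton_iff] at hv
      rcases hv with rfl | rfl | rfl
      · exact ⟨1, 0, 0, by ring⟩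
      · exact ⟨0, 1, 0, by ring⟩
      · exact ⟨0, 0, 1, by ring⟩
    | zero => exact ⟨0, 0, 0, by ring⟩
    | add s t _ _ hs ht =>
      obtain ⟨x, y, w, rfl⟩ := hs
      obtain ⟨x', y', w', rfl⟩ := ht
      exact ⟨x + x', y + y', w + w', by ring⟩
  · rintro ⟨x, y, w, rfl⟩
    have h1 : n1 ∈ AddSubmonoid.closure ({n1, n2, n3} : Set ℕ) :=
      AddSubmonoid.subset_closure (by simp)
    have h2 : n2 ∈ AddSubmonoid.closure ({n1, n2, n3} : Set ℕ) :=
      AddSubmonoid.subset_closure (by simp)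
    have h3 : n3 ∈ AddSubmonoid.closure ({n1, n2, n3} : Set ℕ) :=
      AddSubmonoid.subset_closure (by simp)
    have := add_mem (add_mem (AddSubmonoid.nsmul_mem _ h1 x) (AddSubmonoid.nsmul_mem _ h2 y))
      (AddSubmonoid.nsmul_mem _ h3 w)
    simpa [smul_eq_mul] using this

lemma dvdIn_iff (n1 n2 n3 u m : ℕ) :
    dvdIn ({n1, n2, n3} : Set ℕ) u m ↔ ∃ x y w : ℕ, m = u + (x*n1 + y*n2 + w*n3) := by
  constructor
  · rintro ⟨c, hc, rfl⟩
    obtain ⟨x, y, w, rfl⟩ := (mem_closure_iff n1 n2 n3 c).1 hc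
    exact ⟨x, y, w, rfl⟩
  · rintro ⟨x, y, w, rfl⟩
    exact ⟨_, (mem_closure_iff n1 n2 n3 _).2 ⟨x, y, w, rfl⟩, rfl⟩

lemma exists_subset_sum {n : ℕ} (x : Fin n → ℕ) (s : Finset (Fin n)) :
    ∀ m : ℕ, m ≤ ∑ i ∈ s, x i → ∃ Ω ⊆ s, Ω.card ≤ m ∧ m ≤ ∑ i ∈ Ω, x i := by
  intro m
  induction m with
  | zero => exact fun _ => ⟨∅, Finset.empty_subset _, by simp, by simp⟩
  | succ m ih =>
    intro h
    obtain ⟨Ω, hΩs, hcard, hsum⟩ := ih (le_trans (Nat.le_succ m) h)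
    by_cases h' : m + 1 ≤ ∑ i ∈ Ω, x i
    · exact ⟨Ω, hΩs, hcard.trans (Nat.le_succ m), h'⟩
    · have hex : ∃ i ∈ s, i ∉ Ω ∧ 1 ≤ x i := by
        by_contra hc
        push_neg at hc
        have : ∑ i ∈ s, x i = ∑ i ∈ Ω, x i := by
          rw [← Finset.sum_subset hΩs]
          intro i hi hni
          have := hc i hi hni
          omega
        omega
      obtain ⟨i, his, hiΩ, hxi⟩ := hex
      exact ⟨insert i Ω, Finset.insert_subset his hΩs,
        by rw [Finset.card_insert_of_notMem hiΩ]; omega,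
        by rw [Finset.sum_insert hiΩ]; omega⟩

/-- triple multiset -/
def T (v1 v2 v3 : ℕ) (x y w : ℕ) : Multiset ℕ :=
  Multiset.replicate x v1 + Multiset.replicate y v2 + Multiset.replicate w v3

lemma T_sum (v1 v2 v3 x y w : ℕ) : (T v1 v2 v3 x y w).sum = x*v1 + y*v2 + w*v3 := by
  simp [T, Multiset.sum_replicate, smul_eq_mul]

lemma T_card (v1 v2 v3 x y w : ℕ) : Multiset.card (T v1 v2 v3 x y w) = x + y + w := by
  simp [T]

lemma T_mem {v1 v2 v3 x y w v : ℕ} (h : v ∈ T v1 v2 v3 x y w) :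
    v = v1 ∨ v = v2 ∨ v = v3 := by
  simp only [T, Multiset.mem_add, Multiset.mem_replicate] at h
  tauto

lemma T_mem2 {v1 v2 v3 x y w : ℕ} (hy : 1 ≤ y) : v2 ∈ T v1 v2 v3 x y w := by
  have hy' : y ≠ 0 := by omega
  simp [T, Multiset.mem_replicate, hy']

lemma T_count {v1 v2 v3 : ℕ} (h12 : v1 ≠ v2) (h13 : v1 ≠ v3) (h23 : v2 ≠ v3)
    (x y w : ℕ) :
    Multiset.count v1 (T v1 v2 v3 x y w) = x ∧
    Multiset.count v2 (T v1 v2 v3 x y w) = y ∧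
    Multiset.count v3 (T v1 v2 v3 x y w) = w := by
  refine ⟨?_, ?_, ?_⟩ <;>
    simp [T, Multiset.count_replicate, h12, h13, h23, h12.symm, h13.symm, h23.symm]

lemma T_sub {v1 v2 v3 : ℕ} (h12 : v1 ≠ v2) (h13 : v1 ≠ v3) (h23 : v2 ≠ v3)
    (x y w x' y' w' : ℕ) :
    T v1 v2 v3 x y w - T v1 v2 v3 x' y' w' = T v1 v2 v3 (x - x') (y - y') (w - w') := by
  rw [Multiset.ext]
  intro a
  simp only [T, Multiset.count_sub, Multiset.count_add, Multiset.count_replicate]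
  by_cases h1 : v1 = a <;> by_cases h2 : v2 = a <;> by_cases h3 : v3 = a <;>
    simp_all <;> omega

lemma numDist_T {v1 v2 v3 : ℕ} (h12 : v1 ≠ v2) (h13 : v1 ≠ v3) (h23 : v2 ≠ v3)
    (x y w x' y' w' : ℕ) :
    max (Multiset.card (T v1 v2 v3 x y w - T v1 v2 v3 x' y' w'))
        (Multiset.card (T v1 v2 v3 x' y' w' - T v1 v2 v3 x y w)) =
      max ((x - x') + (y - y') + (w - w')) ((x' - x) + (y' - y) + (w' - w)) := by
  rw [T_sub h12 h13 h23, T_sub h12 h13 h23, T_card, T_card]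

lemma T_eq_self {v1 v2 v3 : ℕ} (h12 : v1 ≠ v2) (h13 : v1 ≠ v3) (h23 : v2 ≠ v3)
    {z : Multiset ℕ} (hz : ∀ v ∈ z, v = v1 ∨ v = v2 ∨ v = v3) :
    z = T v1 v2 v3 (Multiset.count v1 z) (Multiset.count v2 z) (Multiset.count v3 z) := by
  rw [Multiset.ext]
  intro a
  by_cases h1 : a = v1
  · subst h1
    simp [T, Multiset.count_replicate, h12.symm, h13.symm, h12, h13]
  by_cases h2 : a = v2
  · subst h2
    simp [T, Multiset.count_replicate, h12, h23, h12.symm, h23.symm]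
  by_cases h3 : a = v3
  · subst h3
    simp [T, Multiset.count_replicate, h13, h23, h13.symm, h23.symm]
  · have : a ∉ z := fun hm => by rcases hz a hm with rfl | rfl | rfl <;> simp_all
    rw [Multiset.count_eq_zero.mpr this]
    simp [T, Multiset.count_replicate, Ne.symm h1, Ne.symm h2, Ne.symm h3]


section OmegaUB

variable {q p₁ p₂ k : ℕ} (hq : q.Prime) (hsum : p₁ + p₂ = q)
  (hcop : Nat.gcd p₁ p₂ = 1) (hknd : ¬ q ∣ k)
  (hp1 : 0 < p₁) (hp : p₁ < p₂) (hk2 : 2 ≤ k)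

include hq hsum hcop hknd hp1 hp hk2

lemma omegaUB_q : ∀ (n : ℕ) (a : Fin n → ℕ),
    (∀ i, a i ∈ AddSubmonoid.closure ({p₁*k, q, p₂*k} : Set ℕ)) →
    dvdIn {p₁*k, q, p₂*k} q (∑ i, a i) →
    ∃ Ω : Finset (Fin n), Ω.card ≤ max k (p₂+1) ∧ dvdIn {p₁*k, q, p₂*k} q (∑ i ∈ Ω, a i) := by
  have hp2 : 0 < p₂ := lt_of_le_of_lt (Nat.zero_le _) hp
  have hk : 0 < k := by omega
  intro n a ha hdvd
  choose x y w hxyw using fun i => (mem_closure_iff (p₁*k) q (p₂*k) (a i)).1 (ha i)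
  have key : ∀ Ω : Finset (Fin n), ∑ i ∈ Ω, a i =
      (∑ i ∈ Ω, x i)*(p₁*k) + (∑ i ∈ Ω, y i)*q + (∑ i ∈ Ω, w i)*(p₂*k) := by
    intro Ω
    calc ∑ i ∈ Ω, a i = ∑ i ∈ Ω, (x i*(p₁*k) + y i*q + w i*(p₂*k)) :=
          Finset.sum_congr rfl fun i _ => hxyw i
      _ = _ := by
          rw [Finset.sum_add_distrib, Finset.sum_add_distrib, Finset.sum_mul,
            Finset.sum_mul, Finset.sum_mul]
  by_cases hy : ∃ i, 1 ≤ y i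
  · obtain ⟨i, hi⟩ := hy
    obtain ⟨t, ht⟩ : ∃ t, y i = t + 1 := ⟨y i - 1, by omega⟩
    refine ⟨{i}, by simp only [Finset.card_singleton]; exact le_trans (by omega) (le_max_right _ _), ?_⟩
    rw [dvdIn_iff]
    refine ⟨x i, t, w i, ?_⟩
    rw [Finset.sum_singleton, hxyw i, ht]
    ring
  · push_neg at hy
    have hy0 : ∀ i, y i = 0 := fun i => by have := hy i; omega
    subst hsum
    by_cases hx : ∃ i, 1 ≤ x i
    · by_cases hw : ∃ j, 1 ≤ w j
      · obtain ⟨i, hi⟩ := hx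
        obtain ⟨j, hj⟩ := hw
        obtain ⟨c, hc⟩ : ∃ c, k = c + 1 := ⟨k - 1, by omega⟩
        by_cases hij : i = j
        · subst hij
          obtain ⟨s, hs⟩ : ∃ s, x i = s + 1 := ⟨x i - 1, by omega⟩
          obtain ⟨t, ht⟩ : ∃ t, w i = t + 1 := ⟨w i - 1, by omega⟩
          refine ⟨{i}, by simp only [Finset.card_singleton]; exact le_trans (by omega) (le_max_right _ _), ?_⟩
          rw [dvdIn_iff]
          refine ⟨s, c, t, ?_⟩
          rw [Finset.sum_singleton, hxyw i, hy0 i, hs, ht, hc]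
          ring
        · obtain ⟨s, hs⟩ : ∃ s, x i = s + 1 := ⟨x i - 1, by omega⟩
          obtain ⟨t, ht⟩ : ∃ t, w j = t + 1 := ⟨w j - 1, by omega⟩
          refine ⟨{i, j}, ?_, ?_⟩
          · rw [Finset.card_pair hij]; omega
          · rw [dvdIn_iff]
            refine ⟨s + x j, c, w i + t, ?_⟩
            rw [Finset.sum_pair hij, hxyw i, hxyw j, hy0 i, hy0 j, hs, ht, hc]
            ring
      · push_neg at hw
        have hw0 : ∀ i, w i = 0 := fun i => by have := hw i; omega
        have hX : ∑ i, a i = (∑ i, x i) * (p₁*k) := by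
          rw [key Finset.univ]
          simp [hy0, hw0]
        rw [hX, dvdIn_iff] at hdvd
        obtain ⟨x', y', w', heq⟩ := hdvd
        have hX1 : p₂ + 1 ≤ ∑ i, x i := by
          by_contra h'
          push_neg at h'
          exact L2 hq rfl hcop hknd hp1 hp2 hk _ x' y' w' (by omega) heq
        obtain ⟨Ω, hΩs, hcard, hge⟩ := exists_subset_sum x Finset.univ (p₂+1) hX1
        refine ⟨Ω, le_trans hcard (le_max_right _ _), ?_⟩
        have hXΩ : ∑ i ∈ Ω, a i = (∑ i ∈ Ω, x i) * (p₁*k) := by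
          rw [key Ω]; simp [hy0, hw0]
        obtain ⟨d, hd⟩ : ∃ d, ∑ i ∈ Ω, x i = p₂ + 1 + d := ⟨∑ i ∈ Ω, x i - (p₂+1), by omega⟩
        obtain ⟨c, hc⟩ : ∃ c, k = c + 1 := ⟨k - 1, by omega⟩
        obtain ⟨e, he⟩ : ∃ e, p₁ = e + 1 := ⟨p₁ - 1, by omega⟩
        rw [dvdIn_iff]
        refine ⟨d, c, e, ?_⟩
        rw [hXΩ, hd, hc, he]
        ring
    · push_neg at hx
      have hx0 : ∀ i, x i = 0 := fun i => by have := hx i; omega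
      have hW : ∑ i, a i = (∑ i, w i) * (p₂*k) := by
        rw [key Finset.univ]
        simp [hy0, hx0]
      rw [hW, dvdIn_iff] at hdvd
      obtain ⟨x', y', w', heq⟩ := hdvd
      have hW1 : p₁ + 1 ≤ ∑ i, w i := by
        by_contra h'
        push_neg at h'
        exact L2' hq rfl hcop hknd hp1 hp2 hk _ x' y' w' (by omega) heq
      obtain ⟨Ω, hΩs, hcard, hge⟩ := exists_subset_sum w Finset.univ (p₁+1) hW1
      refine ⟨Ω, le_trans (by omega : Ω.card ≤ p₂ + 1) (le_max_right _ _), ?_⟩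
      have hWΩ : ∑ i ∈ Ω, a i = (∑ i ∈ Ω, w i) * (p₂*k) := by
        rw [key Ω]; simp [hy0, hx0]
      obtain ⟨d, hd⟩ : ∃ d, ∑ i ∈ Ω, w i = p₁ + 1 + d := ⟨∑ i ∈ Ω, w i - (p₁+1), by omega⟩
      obtain ⟨c, hc⟩ : ∃ c, k = c + 1 := ⟨k - 1, by omega⟩
      obtain ⟨f, hf⟩ : ∃ f, p₂ = f + 1 := ⟨p₂ - 1, by omega⟩
      rw [dvdIn_iff]
      refine ⟨f, c, d, ?_⟩
      rw [hWΩ, hd, hc, hf]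
      ring

lemma omegaUB_n1 : ∀ (n : ℕ) (a : Fin n → ℕ),
    (∀ i, a i ∈ AddSubmonoid.closure ({p₁*k, q, p₂*k} : Set ℕ)) →
    dvdIn {p₁*k, q, p₂*k} (p₁*k) (∑ i, a i) →
    ∃ Ω : Finset (Fin n), Ω.card ≤ max k (p₂+1) ∧
      dvdIn {p₁*k, q, p₂*k} (p₁*k) (∑ i ∈ Ω, a i) := by
  have hp2 : 0 < p₂ := lt_of_le_of_lt (Nat.zero_le _) hp
  have hk : 0 < k := by omega
  intro n a ha hdvd
  choose x y w hxyw using fun i => (mem_closure_iff (p₁*k) q (p₂*k) (a i)).1 (ha i)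
  have key : ∀ Ω : Finset (Fin n), ∑ i ∈ Ω, a i =
      (∑ i ∈ Ω, x i)*(p₁*k) + (∑ i ∈ Ω, y i)*q + (∑ i ∈ Ω, w i)*(p₂*k) := by
    intro Ω
    calc ∑ i ∈ Ω, a i = ∑ i ∈ Ω, (x i*(p₁*k) + y i*q + w i*(p₂*k)) :=
          Finset.sum_congr rfl fun i _ => hxyw i
      _ = _ := by
          rw [Finset.sum_add_distrib, Finset.sum_add_distrib, Finset.sum_mul,
            Finset.sum_mul, Finset.sum_mul]
  by_cases hx : ∃ i, 1 ≤ x i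
  · obtain ⟨i, hi⟩ := hx
    obtain ⟨s, hs⟩ : ∃ s, x i = s + 1 := ⟨x i - 1, by omega⟩
    refine ⟨{i}, by simp only [Finset.card_singleton]; exact le_trans (by omega) (le_max_right _ _), ?_⟩
    rw [dvdIn_iff]
    refine ⟨s, y i, w i, ?_⟩
    rw [Finset.sum_singleton, hxyw i, hs]
    ring
  · push_neg at hx
    have hx0 : ∀ i, x i = 0 := fun i => by have := hx i; omega
    have hYW : ∑ i, a i = (∑ i, y i) * q + (∑ i, w i) * (p₂*k) := by
      rw [key Finset.univ]; simp [hx0]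
    rw [hYW, dvdIn_iff] at hdvd
    obtain ⟨x', y', w', heq⟩ := hdvd
    have hor := L1 hq hsum hcop hknd hp1 hp2 hk _ _ x' y' w' heq
    subst hsum
    by_cases hWc : p₁ ≤ ∑ i, w i
    · obtain ⟨Ω, hΩs, hcard, hge⟩ := exists_subset_sum w Finset.univ p₁ hWc
      refine ⟨Ω, le_trans (by omega : Ω.card ≤ p₂ + 1) (le_max_right _ _), ?_⟩
      obtain ⟨d, hd⟩ : ∃ d, ∑ i ∈ Ω, w i = p₁ + d := ⟨∑ i ∈ Ω, w i - p₁, by omega⟩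
      obtain ⟨f, hf⟩ : ∃ f, p₂ = f + 1 := ⟨p₂ - 1, by omega⟩
      rw [dvdIn_iff]
      refine ⟨f, ∑ i ∈ Ω, y i, d, ?_⟩
      have hx0' : ∑ i ∈ Ω, x i = 0 := by simp [hx0]
      rw [key Ω, hx0', hd, hf]
      ring
    · have hY : k ≤ ∑ i, y i := hor.resolve_right hWc
      obtain ⟨Ω, hΩs, hcard, hge⟩ := exists_subset_sum y Finset.univ k hY
      refine ⟨Ω, le_trans hcard (le_max_left _ _), ?_⟩
      obtain ⟨d, hd⟩ : ∃ d, ∑ i ∈ Ω, y i = k + d := ⟨∑ i ∈ Ω, y i - k, by omega⟩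
      rw [dvdIn_iff]
      refine ⟨0, d, (∑ i ∈ Ω, w i) + 1, ?_⟩
      rw [key Ω, hd]
      have hx0' : ∑ i ∈ Ω, x i = 0 := by simp [hx0]
      rw [hx0']
      ring

lemma omegaUB_n3 : ∀ (n : ℕ) (a : Fin n → ℕ),
    (∀ i, a i ∈ AddSubmonoid.closure ({p₁*k, q, p₂*k} : Set ℕ)) →
    dvdIn {p₁*k, q, p₂*k} (p₂*k) (∑ i, a i) →
    ∃ Ω : Finset (Fin n), Ω.card ≤ max k (p₂+1) ∧
      dvdIn {p₁*k, q, p₂*k} (p₂*k) (∑ i ∈ Ω, a i) := by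
  have hp2 : 0 < p₂ := lt_of_le_of_lt (Nat.zero_le _) hp
  have hk : 0 < k := by omega
  intro n a ha hdvd
  choose x y w hxyw using fun i => (mem_closure_iff (p₁*k) q (p₂*k) (a i)).1 (ha i)
  have key : ∀ Ω : Finset (Fin n), ∑ i ∈ Ω, a i =
      (∑ i ∈ Ω, x i)*(p₁*k) + (∑ i ∈ Ω, y i)*q + (∑ i ∈ Ω, w i)*(p₂*k) := by
    intro Ω
    calc ∑ i ∈ Ω, a i = ∑ i ∈ Ω, (x i*(p₁*k) + y i*q + w i*(p₂*k)) :=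
          Finset.sum_congr rfl fun i _ => hxyw i
      _ = _ := by
          rw [Finset.sum_add_distrib, Finset.sum_add_distrib, Finset.sum_mul,
            Finset.sum_mul, Finset.sum_mul]
  by_cases hw : ∃ i, 1 ≤ w i
  · obtain ⟨i, hi⟩ := hw
    obtain ⟨t, ht⟩ : ∃ t, w i = t + 1 := ⟨w i - 1, by omega⟩
    refine ⟨{i}, by simp only [Finset.card_singleton]; exact le_trans (by omega) (le_max_right _ _), ?_⟩
    rw [dvdIn_iff]
    refine ⟨x i, y i, t, ?_⟩
    rw [Finset.sum_singleton, hxyw i, ht]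
    ring
  · push_neg at hw
    have hw0 : ∀ i, w i = 0 := fun i => by have := hw i; omega
    have hXY : ∑ i, a i = (∑ i, x i) * (p₁*k) + (∑ i, y i) * q := by
      rw [key Finset.univ]; simp [hw0]
    rw [hXY, dvdIn_iff] at hdvd
    obtain ⟨x', y', w', heq⟩ := hdvd
    have hor := L3 hq hsum hcop hknd hp1 hp2 hk _ _ x' y' w' heq
    subst hsum
    by_cases hXc : p₂ ≤ ∑ i, x i
    · obtain ⟨Ω, hΩs, hcard, hge⟩ := exists_subset_sum x Finset.univ p₂ hXc
      refine ⟨Ω, le_trans (by omega : Ω.card ≤ p₂ + 1) (le_max_right _ _), ?_⟩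
      obtain ⟨d, hd⟩ : ∃ d, ∑ i ∈ Ω, x i = p₂ + d := ⟨∑ i ∈ Ω, x i - p₂, by omega⟩
      obtain ⟨e, he⟩ : ∃ e, p₁ = e + 1 := ⟨p₁ - 1, by omega⟩
      rw [dvdIn_iff]
      refine ⟨d, ∑ i ∈ Ω, y i, e, ?_⟩
      rw [key Ω, hd, he]
      have hw0' : ∑ i ∈ Ω, w i = 0 := by simp [hw0]
      rw [hw0']
      ring
    · have hY : k ≤ ∑ i, y i := hor.resolve_right hXc
      obtain ⟨Ω, hΩs, hcard, hge⟩ := exists_subset_sum y Finset.univ k hY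
      refine ⟨Ω, le_trans hcard (le_max_left _ _), ?_⟩
      obtain ⟨d, hd⟩ : ∃ d, ∑ i ∈ Ω, y i = k + d := ⟨∑ i ∈ Ω, y i - k, by omega⟩
      rw [dvdIn_iff]
      refine ⟨(∑ i ∈ Ω, x i) + 1, d, 0, ?_⟩
      rw [key Ω, hd]
      have hw0' : ∑ i ∈ Ω, w i = 0 := by simp [hw0]
      rw [hw0']
      ring

end OmegaUB

lemma T_mem1 {v1 v2 v3 x y w : ℕ} (hx : 1 ≤ x) : v1 ∈ T v1 v2 v3 x y w := by
  have hx' : x ≠ 0 := by omega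
  simp [T, Multiset.mem_replicate, hx']

lemma T_mem3 {v1 v2 v3 x y w : ℕ} (hw : 1 ≤ w) : v3 ∈ T v1 v2 v3 x y w := by
  have hw' : w ≠ 0 := by omega
  simp [T, Multiset.mem_replicate, hw']

section TameUB

variable {q p₁ p₂ k : ℕ} (hq : q.Prime) (hsum : p₁ + p₂ = q)
  (hcop : Nat.gcd p₁ p₂ = 1) (hknd : ¬ q ∣ k)
  (hp1 : 0 < p₁) (hp : p₁ < p₂) (hk2 : 2 ≤ k)
  (hk1 : p₁ * k < q) (hk2' : q < p₂ * k)

include hq hsum hcop hknd hp1 hp hk2 hk1 hk2'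

lemma tameUB_q (a : ℕ) : ∀ z : Multiset ℕ, NumFact {p₁*k, q, p₂*k} a z →
    (∃ z₀ : Multiset ℕ, NumFact {p₁*k, q, p₂*k} a z₀ ∧ q ∈ z₀) →
    ∃ z' : Multiset ℕ, NumFact {p₁*k, q, p₂*k} a z' ∧ q ∈ z' ∧
      (numDist z z' : ℕ∞) ≤ ((k + p₂ - 1 : ℕ) : ℕ∞) := by
  have hp2 : 0 < p₂ := by omega
  have hk : 0 < k := by omega
  have hne12 : p₁ * k ≠ q := Nat.ne_of_lt hk1
  have hne13 : p₁ * k ≠ p₂ * k := Nat.ne_of_lt (lt_trans hk1 hk2')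
  have hne23 : q ≠ p₂ * k := Nat.ne_of_lt hk2'
  intro z hz hex
  by_cases hu : q ∈ z
  · refine ⟨z, hz, hu, ?_⟩
    have h0 : numDist z z = 0 := by simp [numDist]
    rw [h0]
    exact_mod_cast Nat.zero_le _
  · have hmem : ∀ v ∈ z, v = p₁*k ∨ v = q ∨ v = p₂*k := fun v hv => by
      have h := hz.1 v hv; simpa using h
    have hzT := T_eq_self hne12 hne13 hne23 hmem
    have hyc : Multiset.count q z = 0 := Multiset.count_eq_zero.mpr hu
    rw [hyc] at hzT
    set xc := Multiset.count (p₁*k) z with hxc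
    set wc := Multiset.count (p₂*k) z with hwc
    have haz : xc*(p₁*k) + wc*(p₂*k) = a := by
      have h2 := hz.2
      rw [hzT, T_sum] at h2
      simpa using h2
    obtain ⟨z₀, hz₀, hq₀⟩ := hex
    have hsum0 : q + (z₀.erase q).sum = a := by rw [Multiset.sum_erase hq₀, hz₀.2]
    have hclos : (z₀.erase q).sum ∈ AddSubmonoid.closure ({p₁*k, q, p₂*k} : Set ℕ) :=
      AddSubmonoid.multiset_sum_mem _ _ fun b hb =>
        AddSubmonoid.subset_closure (hz₀.1 b (Multiset.mem_of_mem_erase hb))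
    obtain ⟨x', y', w', hrep⟩ := (mem_closure_iff _ _ _ _).1 hclos
    have heq : xc*(p₁*k) + wc*(p₂*k) = q + (x'*(p₁*k) + y'*q + w'*(p₂*k)) := by
      rw [haz, ← hrep]; exact hsum0.symm
    by_cases hxc1 : 1 ≤ xc
    · by_cases hwc1 : 1 ≤ wc
      · -- use k·q = n1 + n3
        obtain ⟨s, hs⟩ : ∃ s, xc = s + 1 := ⟨xc - 1, by omega⟩
        obtain ⟨t, ht⟩ : ∃ t, wc = t + 1 := ⟨wc - 1, by omega⟩
        refine ⟨T (p₁*k) q (p₂*k) s k t, ⟨fun v hv => by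
            rcases T_mem hv with rfl | rfl | rfl <;> simp, ?_⟩,
          T_mem2 hk, ?_⟩
        · rw [T_sum, ← haz, hs, ht, ← hsum]; ring
        · have hd : numDist z (T (p₁*k) q (p₂*k) s k t) =
              max ((xc - s) + (0 - k) + (wc - t)) ((s - xc) + (k - 0) + (t - wc)) := by
            rw [hzT]
            simp only [numDist]
            exact numDist_T hne12 hne13 hne23 _ _ _ _ _ _
          rw [hd]
          exact Nat.cast_le.mpr (by omega)
      · -- wc = 0 : xc ≥ p₂ + 1
        have hwc0 : wc = 0 := by omega
        rw [hwc0, zero_mul, add_zero] at heq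
        have hxcge : p₂ + 1 ≤ xc := by
          by_contra h'
          push_neg at h'
          exact L2 hq hsum hcop hknd hp1 hp2 hk _ x' y' w' (by omega) heq
        obtain ⟨d, hd0⟩ : ∃ d, xc = p₂ + 1 + d := ⟨xc - (p₂+1), by omega⟩
        obtain ⟨e, he⟩ : ∃ e, p₁ = e + 1 := ⟨p₁ - 1, by omega⟩
        refine ⟨T (p₁*k) q (p₂*k) d k e, ⟨fun v hv => by
            rcases T_mem hv with rfl | rfl | rfl <;> simp, ?_⟩,
          T_mem2 hk, ?_⟩
        · rw [T_sum, ← haz, hwc0, hd0, ← hsum, he]; ring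
        · have hdi : numDist z (T (p₁*k) q (p₂*k) d k e) =
              max ((xc - d) + (0 - k) + (wc - e)) ((d - xc) + (k - 0) + (e - wc)) := by
            rw [hzT]
            simp only [numDist]
            exact numDist_T hne12 hne13 hne23 _ _ _ _ _ _
          rw [hdi]
          exact Nat.cast_le.mpr (by omega)
    · -- xc = 0 : wc ≥ p₁ + 1
      have hxc0 : xc = 0 := by omega
      rw [hxc0, zero_mul, zero_add] at heq
      by_cases hwc1 : 1 ≤ wc
      · have hwcge : p₁ + 1 ≤ wc := by
          by_contra h'
          push_neg at h'
          exact L2' hq hsum hcop hknd hp1 hp2 hk _ x' y' w' (by omega) heq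
        obtain ⟨d, hd0⟩ : ∃ d, wc = p₁ + 1 + d := ⟨wc - (p₁+1), by omega⟩
        obtain ⟨f, hf⟩ : ∃ f, p₂ = f + 1 := ⟨p₂ - 1, by omega⟩
        refine ⟨T (p₁*k) q (p₂*k) f k d, ⟨fun v hv => by
            rcases T_mem hv with rfl | rfl | rfl <;> simp, ?_⟩,
          T_mem2 hk, ?_⟩
        · rw [T_sum, ← haz, hxc0, hd0, ← hsum, hf]; ring
        · have hdi : numDist z (T (p₁*k) q (p₂*k) f k d) =
              max ((xc - f) + (0 - k) + (wc - d)) ((f - xc) + (k - 0) + (d - wc)) := by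
            rw [hzT]
            simp only [numDist]
            exact numDist_T hne12 hne13 hne23 _ _ _ _ _ _
          rw [hdi]
          exact Nat.cast_le.mpr (by omega)
      · have hwc0 : wc = 0 := by omega
        rw [hwc0, zero_mul] at heq
        have : q ≤ 0 := le_trans (Nat.le_add_right q _) heq.symm.le
        omega

lemma tameUB_n1 (a : ℕ) : ∀ z : Multiset ℕ, NumFact {p₁*k, q, p₂*k} a z →
    (∃ z₀ : Multiset ℕ, NumFact {p₁*k, q, p₂*k} a z₀ ∧ p₁*k ∈ z₀) →
    ∃ z' : Multiset ℕ, NumFact {p₁*k, q, p₂*k} a z' ∧ p₁*k ∈ z' ∧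
      (numDist z z' : ℕ∞) ≤ ((k + p₂ - 1 : ℕ) : ℕ∞) := by
  have hp2 : 0 < p₂ := by omega
  have hk : 0 < k := by omega
  have hne12 : p₁ * k ≠ q := Nat.ne_of_lt hk1
  have hne13 : p₁ * k ≠ p₂ * k := Nat.ne_of_lt (lt_trans hk1 hk2')
  have hne23 : q ≠ p₂ * k := Nat.ne_of_lt hk2'
  intro z hz hex
  by_cases hu : p₁*k ∈ z
  · refine ⟨z, hz, hu, ?_⟩
    have h0 : numDist z z = 0 := by simp [numDist]
    rw [h0]
    exact_mod_cast Nat.zero_le _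
  · have hmem : ∀ v ∈ z, v = p₁*k ∨ v = q ∨ v = p₂*k := fun v hv => by
      have h := hz.1 v hv; simpa using h
    have hzT := T_eq_self hne12 hne13 hne23 hmem
    have hxc : Multiset.count (p₁*k) z = 0 := Multiset.count_eq_zero.mpr hu
    rw [hxc] at hzT
    set yc := Multiset.count q z with hyc
    set wc := Multiset.count (p₂*k) z with hwc
    have haz : yc*q + wc*(p₂*k) = a := by
      have h2 := hz.2
      rw [hzT, T_sum] at h2
      simpa using h2
    obtain ⟨z₀, hz₀, hq₀⟩ := hex
    have hsum0 : p₁*k + (z₀.erase (p₁*k)).sum = a := by rw [Multiset.sum_erase hq₀, hz₀.2]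
    have hclos : (z₀.erase (p₁*k)).sum ∈ AddSubmonoid.closure ({p₁*k, q, p₂*k} : Set ℕ) :=
      AddSubmonoid.multiset_sum_mem _ _ fun b hb =>
        AddSubmonoid.subset_closure (hz₀.1 b (Multiset.mem_of_mem_erase hb))
    obtain ⟨x', y', w', hrep⟩ := (mem_closure_iff _ _ _ _).1 hclos
    have heq : yc*q + wc*(p₂*k) = p₁*k + (x'*(p₁*k) + y'*q + w'*(p₂*k)) := by
      rw [haz, ← hrep]; exact hsum0.symm
    have hor := L1 hq hsum hcop hknd hp1 hp2 hk _ _ x' y' w' heq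
    rcases hor with hY | hW
    · obtain ⟨d, hd0⟩ : ∃ d, yc = k + d := ⟨yc - k, by omega⟩
      refine ⟨T (p₁*k) q (p₂*k) 1 d (wc+1), ⟨fun v hv => by
          rcases T_mem hv with rfl | rfl | rfl <;> simp, ?_⟩,
        T_mem1 (by omega), ?_⟩
      · rw [T_sum, ← haz, hd0, ← hsum]; ring
      · have hdi : numDist z (T (p₁*k) q (p₂*k) 1 d (wc+1)) =
            max ((0 - 1) + (yc - d) + (wc - (wc+1))) ((1 - 0) + (d - yc) + ((wc+1) - wc)) := by
          rw [hzT]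
          simp only [numDist]
          exact numDist_T hne12 hne13 hne23 _ _ _ _ _ _
        rw [hdi]
        exact Nat.cast_le.mpr (by omega)
    · obtain ⟨d, hd0⟩ : ∃ d, wc = p₁ + d := ⟨wc - p₁, by omega⟩
      refine ⟨T (p₁*k) q (p₂*k) p₂ yc d, ⟨fun v hv => by
          rcases T_mem hv with rfl | rfl | rfl <;> simp, ?_⟩,
        T_mem1 (by omega), ?_⟩
      · rw [T_sum, ← haz, hd0]; ring
      · have hdi : numDist z (T (p₁*k) q (p₂*k) p₂ yc d) =
            max ((0 - p₂) + (yc - yc) + (wc - d)) ((p₂ - 0) + (yc - yc) + (d - wc)) := by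
          rw [hzT]
          simp only [numDist]
          exact numDist_T hne12 hne13 hne23 _ _ _ _ _ _
        rw [hdi]
        exact Nat.cast_le.mpr (by omega)

lemma tameUB_n3 (a : ℕ) : ∀ z : Multiset ℕ, NumFact {p₁*k, q, p₂*k} a z →
    (∃ z₀ : Multiset ℕ, NumFact {p₁*k, q, p₂*k} a z₀ ∧ p₂*k ∈ z₀) →
    ∃ z' : Multiset ℕ, NumFact {p₁*k, q, p₂*k} a z' ∧ p₂*k ∈ z' ∧
      (numDist z z' : ℕ∞) ≤ ((k + p₂ - 1 : ℕ) : ℕ∞) := by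
  have hp2 : 0 < p₂ := by omega
  have hk : 0 < k := by omega
  have hne12 : p₁ * k ≠ q := Nat.ne_of_lt hk1
  have hne13 : p₁ * k ≠ p₂ * k := Nat.ne_of_lt (lt_trans hk1 hk2')
  have hne23 : q ≠ p₂ * k := Nat.ne_of_lt hk2'
  intro z hz hex
  by_cases hu : p₂*k ∈ z
  · refine ⟨z, hz, hu, ?_⟩
    have h0 : numDist z z = 0 := by simp [numDist]
    rw [h0]
    exact_mod_cast Nat.zero_le _
  · have hmem : ∀ v ∈ z, v = p₁*k ∨ v = q ∨ v = p₂*k := fun v hv => by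
      have h := hz.1 v hv; simpa using h
    have hzT := T_eq_self hne12 hne13 hne23 hmem
    have hwc : Multiset.count (p₂*k) z = 0 := Multiset.count_eq_zero.mpr hu
    rw [hwc] at hzT
    set xc := Multiset.count (p₁*k) z with hxc
    set yc := Multiset.count q z with hyc
    have haz : xc*(p₁*k) + yc*q = a := by
      have h2 := hz.2
      rw [hzT, T_sum] at h2
      simpa using h2
    obtain ⟨z₀, hz₀, hq₀⟩ := hex
    have hsum0 : p₂*k + (z₀.erase (p₂*k)).sum = a := by rw [Multiset.sum_erase hq₀, hz₀.2]
    have hclos : (z₀.erase (p₂*k)).sum ∈ AddSubmonoid.closure ({p₁*k, q, p₂*k} : Set ℕ) :=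
      AddSubmonoid.multiset_sum_mem _ _ fun b hb =>
        AddSubmonoid.subset_closure (hz₀.1 b (Multiset.mem_of_mem_erase hb))
    obtain ⟨x', y', w', hrep⟩ := (mem_closure_iff _ _ _ _).1 hclos
    have heq : xc*(p₁*k) + yc*q = p₂*k + (x'*(p₁*k) + y'*q + w'*(p₂*k)) := by
      rw [haz, ← hrep]; exact hsum0.symm
    have hor := L3 hq hsum hcop hknd hp1 hp2 hk _ _ x' y' w' heq
    rcases hor with hY | hX
    · obtain ⟨d, hd0⟩ : ∃ d, yc = k + d := ⟨yc - k, by omega⟩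
      refine ⟨T (p₁*k) q (p₂*k) (xc+1) d 1, ⟨fun v hv => by
          rcases T_mem hv with rfl | rfl | rfl <;> simp, ?_⟩,
        T_mem3 (by omega), ?_⟩
      · rw [T_sum, ← haz, hd0, ← hsum]; ring
      · have hdi : numDist z (T (p₁*k) q (p₂*k) (xc+1) d 1) =
            max ((xc - (xc+1)) + (yc - d) + (0 - 1)) (((xc+1) - xc) + (d - yc) + (1 - 0)) := by
          rw [hzT]
          simp only [numDist]
          exact numDist_T hne12 hne13 hne23 _ _ _ _ _ _
        rw [hdi]
        exact Nat.cast_le.mpr (by omega)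
    · obtain ⟨d, hd0⟩ : ∃ d, xc = p₂ + d := ⟨xc - p₂, by omega⟩
      refine ⟨T (p₁*k) q (p₂*k) d yc p₁, ⟨fun v hv => by
          rcases T_mem hv with rfl | rfl | rfl <;> simp, ?_⟩,
        T_mem3 (by omega), ?_⟩
      · rw [T_sum, ← haz, hd0]; ring
      · have hdi : numDist z (T (p₁*k) q (p₂*k) d yc p₁) =
            max ((xc - d) + (yc - yc) + (0 - p₁)) ((d - xc) + (yc - yc) + (p₁ - 0)) := by
          rw [hzT]
          simp only [numDist]
          exact numDist_T hne12 hne13 hne23 _ _ _ _ _ _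
        rw [hdi]
        exact Nat.cast_le.mpr (by omega)

end TameUB

section LB

variable {q p₁ p₂ k : ℕ} (hq : q.Prime) (hsum : p₁ + p₂ = q)
  (hcop : Nat.gcd p₁ p₂ = 1) (hknd : ¬ q ∣ k)
  (hp1 : 0 < p₁) (hp : p₁ < p₂) (hk2 : 2 ≤ k)
  (hk1 : p₁ * k < q) (hk2' : q < p₂ * k)

include hq hsum hcop hknd hp1 hp hk2

lemma omegaLB_q : ((p₂ + 1 : ℕ) : ℕ∞) ≤ omegaNum {p₁*k, q, p₂*k} q := by
  have hp2 : 0 < p₂ := by omega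
  have hk : 0 < k := by omega
  apply le_sInf
  intro N hN
  have hdvdtot : dvdIn {p₁*k, q, p₂*k} q (∑ _i : Fin (p₂+1), p₁*k) := by
    rw [dvdIn_iff]
    refine ⟨0, k - 1, p₁ - 1, ?_⟩
    obtain ⟨c, hc⟩ : ∃ c, k = c + 1 := ⟨k - 1, by omega⟩
    obtain ⟨e, he⟩ : ∃ e, p₁ = e + 1 := ⟨p₁ - 1, by omega⟩
    rw [Finset.sum_const, Finset.card_univ, Fintype.card_fin, smul_eq_mul, ← hsum, hc, he]
    simp only [Nat.add_sub_cancel]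
    ring
  obtain ⟨Ω, hcard, hdvd⟩ := hN (p₂+1) (fun _ => p₁*k)
    (fun _ => AddSubmonoid.subset_closure (by simp)) hdvdtot
  have hsumΩ : ∑ _i ∈ Ω, p₁*k = Ω.card * (p₁*k) := by
    rw [Finset.sum_const, smul_eq_mul]
  rw [hsumΩ, dvdIn_iff] at hdvd
  obtain ⟨x, y, w, heq⟩ := hdvd
  have hge : p₂ + 1 ≤ Ω.card := by
    by_contra h'
    push_neg at h'
    exact L2 hq hsum hcop hknd hp1 hp2 hk _ x y w (by omega) heq
  exact le_trans (Nat.cast_le.mpr hge) hcard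

lemma omegaLB_n1 : ((k : ℕ) : ℕ∞) ≤ omegaNum {p₁*k, q, p₂*k} (p₁*k) := by
  have hp2 : 0 < p₂ := by omega
  have hk : 0 < k := by omega
  apply le_sInf
  intro N hN
  have hdvdtot : dvdIn {p₁*k, q, p₂*k} (p₁*k) (∑ _i : Fin k, q) := by
    rw [dvdIn_iff]
    refine ⟨0, 0, 1, ?_⟩
    rw [Finset.sum_const, Finset.card_univ, Fintype.card_fin, smul_eq_mul, ← hsum]
    ring
  obtain ⟨Ω, hcard, hdvd⟩ := hN k (fun _ => q)
    (fun _ => AddSubmonoid.subset_closure (by simp)) hdvdtot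
  have hsumΩ : ∑ _i ∈ Ω, q = Ω.card * q := by
    rw [Finset.sum_const, smul_eq_mul]
  rw [hsumΩ, dvdIn_iff] at hdvd
  obtain ⟨x, y, w, heq⟩ := hdvd
  have heq' : Ω.card * q + 0 * (p₂*k) = p₁*k + (x*(p₁*k) + y*q + w*(p₂*k)) := by
    rw [zero_mul, add_zero]; exact heq
  have hge : k ≤ Ω.card :=
    (L1 hq hsum hcop hknd hp1 hp2 hk _ _ x y w heq').resolve_right (by omega)
  exact le_trans (Nat.cast_le.mpr hge) hcard

include hk1 hk2' in
lemma tameLB : ((k + p₂ - 1 : ℕ) : ℕ∞) ≤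
    tameNum {p₁*k, q, p₂*k} ((p₁+1)*(p₂*k)) q := by
  have hp2 : 0 < p₂ := by omega
  have hk : 0 < k := by omega
  have hne12 : p₁ * k ≠ q := Nat.ne_of_lt hk1
  have hne13 : p₁ * k ≠ p₂ * k := Nat.ne_of_lt (lt_trans hk1 hk2')
  have hne23 : q ≠ p₂ * k := Nat.ne_of_lt hk2'
  apply le_sInf
  intro N hN
  have hfz : NumFact {p₁*k, q, p₂*k} ((p₁+1)*(p₂*k)) (T (p₁*k) q (p₂*k) 0 0 (p₁+1)) := by
    refine ⟨fun v hv => by rcases T_mem hv with rfl | rfl | rfl <;> simp, ?_⟩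
    rw [T_sum]; ring
  have hfz₀ : NumFact {p₁*k, q, p₂*k} ((p₁+1)*(p₂*k)) (T (p₁*k) q (p₂*k) (p₂-1) k 0) := by
    refine ⟨fun v hv => by rcases T_mem hv with rfl | rfl | rfl <;> simp, ?_⟩
    obtain ⟨f, hf⟩ : ∃ f, p₂ = f + 1 := ⟨p₂ - 1, by omega⟩
    rw [T_sum, ← hsum, hf]
    simp only [Nat.add_sub_cancel]
    ring
  obtain ⟨z', hz', hqz', hdist⟩ := hN _ hfz ⟨_, hfz₀, T_mem2 hk⟩
  have hmem : ∀ v ∈ z', v = p₁*k ∨ v = q ∨ v = p₂*k := fun v hv => by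
    have h := hz'.1 v hv; simpa using h
  have hzT := T_eq_self hne12 hne13 hne23 hmem
  set xc := Multiset.count (p₁*k) z' with hxc
  set yc := Multiset.count q z' with hyc
  set wc := Multiset.count (p₂*k) z' with hwc
  have hyc1 : 1 ≤ yc := Multiset.count_pos.mpr hqz'
  have hsz : xc*(p₁*k) + yc*q + wc*(p₂*k) = (p₁+1)*(p₂*k) := by
    have h2 := hz'.2
    rw [hzT, T_sum] at h2
    exact h2
  obtain ⟨hx', hy', hw'⟩ := Uniq hq hsum hcop hknd hp1 hp2 hk _ _ _ hyc1 hsz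
  have hdi : numDist (T (p₁*k) q (p₂*k) 0 0 (p₁+1)) z' =
      max ((0 - xc) + (0 - yc) + ((p₁+1) - wc)) ((xc - 0) + (yc - 0) + (wc - (p₁+1))) := by
    rw [hzT]
    simp only [numDist]
    exact numDist_T hne12 hne13 hne23 _ _ _ _ _ _
  have hge : k + p₂ - 1 ≤ numDist (T (p₁*k) q (p₂*k) 0 0 (p₁+1)) z' := by
    rw [hdi, hx', hy', hw']
    omega
  exact le_trans (Nat.cast_le.mpr hge) hdist

end LB

end OTAux

/-- for the numerical monoids `S_k = ⟨p₁k, q, p₂k⟩` one has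
`ω(S_k) = max{k, p₂+1}`, `t(S_k) = k + p₂ − 1`, and for `k ≥ p₂+1`,
`ω(S_k) < t(S_k)` with `1 < t(S_k)/ω(S_k) = 1 + (p₂−1)/k < 2`. -/
theorem omega_lt_tame_family (q p₁ p₂ k : ℕ) (hq : q.Prime) (hp : p₁ < p₂)
    (hp1 : 0 < p₁) (hsum : p₁ + p₂ = q) (hcop : Nat.gcd p₁ p₂ = 1)
    (hk2 : 2 ≤ k) (hknd : ¬ q ∣ k) (hk1 : p₁ * k < q) (hk2' : q < p₂ * k) :
    omegaNumS {p₁ * k, q, p₂ * k} = (max k (p₂ + 1) : ℕ) ∧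
    tameNumS {p₁ * k, q, p₂ * k} = ((k + p₂ - 1 : ℕ) : ℕ∞) ∧
    (p₂ + 1 ≤ k →
      omegaNumS {p₁ * k, q, p₂ * k} < tameNumS {p₁ * k, q, p₂ * k} ∧
      ((k + p₂ - 1 : ℕ) : ℚ) / (k : ℚ) = 1 + ((p₂ : ℚ) - 1) / (k : ℚ) ∧
      1 < 1 + ((p₂ : ℚ) - 1) / (k : ℚ) ∧
      1 + ((p₂ : ℚ) - 1) / (k : ℚ) < 2) := by
  have hp2 : 0 < p₂ := by omega
  have hk : 0 < k := by omega
  have hqA : q ∈ ({p₁ * k, q, p₂ * k} : Set ℕ) := by simp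
  have hn1A : p₁ * k ∈ ({p₁ * k, q, p₂ * k} : Set ℕ) := by simp
  have homega : omegaNumS {p₁ * k, q, p₂ * k} = ((max k (p₂ + 1) : ℕ) : ℕ∞) := by
    apply le_antisymm
    · simp only [omegaNumS]
      apply iSup₂_le
      intro u hu
      have hu' : u = p₁*k ∨ u = q ∨ u = p₂*k := by simpa using hu
      rcases hu' with rfl | rfl | rfl
      · apply sInf_le
        intro n a ha hdvd
        obtain ⟨Ω, hc, hd⟩ := OTAux.omegaUB_n1 hq hsum hcop hknd hp1 hp hk2 n a ha hdvd
        exact ⟨Ω, Nat.cast_le.mpr hc, hd⟩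
      · apply sInf_le
        intro n a ha hdvd
        obtain ⟨Ω, hc, hd⟩ := OTAux.omegaUB_q hq hsum hcop hknd hp1 hp hk2 n a ha hdvd
        exact ⟨Ω, Nat.cast_le.mpr hc, hd⟩
      · apply sInf_le
        intro n a ha hdvd
        obtain ⟨Ω, hc, hd⟩ := OTAux.omegaUB_n3 hq hsum hcop hknd hp1 hp hk2 n a ha hdvd
        exact ⟨Ω, Nat.cast_le.mpr hc, hd⟩
    · have h1 : ((k : ℕ) : ℕ∞) ≤ omegaNumS {p₁ * k, q, p₂ * k} := by
        refine le_trans (OTAux.omegaLB_n1 hq hsum hcop hknd hp1 hp hk2) ?_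
        simp only [omegaNumS]
        exact le_iSup₂ (f := fun u (_ : u ∈ ({p₁*k, q, p₂*k} : Set ℕ)) =>
          omegaNum {p₁*k, q, p₂*k} u) (p₁*k) hn1A
      have h2 : ((p₂ + 1 : ℕ) : ℕ∞) ≤ omegaNumS {p₁ * k, q, p₂ * k} := by
        refine le_trans (OTAux.omegaLB_q hq hsum hcop hknd hp1 hp hk2) ?_
        simp only [omegaNumS]
        exact le_iSup₂ (f := fun u (_ : u ∈ ({p₁*k, q, p₂*k} : Set ℕ)) =>
          omegaNum {p₁*k, q, p₂*k} u) q hqA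
      rcases max_choice k (p₂ + 1) with hmx | hmx <;> rw [hmx]
      · exact h1
      · exact h2
  have htame : tameNumS {p₁ * k, q, p₂ * k} = ((k + p₂ - 1 : ℕ) : ℕ∞) := by
    apply le_antisymm
    · simp only [tameNumS]
      apply iSup₂_le
      intro u hu
      apply iSup_le
      intro a
      have hu' : u = p₁*k ∨ u = q ∨ u = p₂*k := by simpa using hu
      rcases hu' with rfl | rfl | rfl
      · exact sInf_le (OTAux.tameUB_n1 hq hsum hcop hknd hp1 hp hk2 hk1 hk2' a)
      · exact sInf_le (OTAux.tameUB_q hq hsum hcop hknd hp1 hp hk2 hk1 hk2' a)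
      · exact sInf_le (OTAux.tameUB_n3 hq hsum hcop hknd hp1 hp hk2 hk1 hk2' a)
    · refine le_trans (OTAux.tameLB hq hsum hcop hknd hp1 hp hk2 hk1 hk2') ?_
      simp only [tameNumS]
      refine le_trans (le_iSup (fun a => tameNum {p₁*k, q, p₂*k} a q) ((p₁+1)*(p₂*k))) ?_
      exact le_iSup₂ (f := fun u (_ : u ∈ ({p₁*k, q, p₂*k} : Set ℕ)) =>
        ⨆ a, tameNum {p₁*k, q, p₂*k} a u) q hqA
  refine ⟨homega, htame, fun hpk => ⟨?_, ?_, ?_, ?_⟩⟩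
  · rw [homega, htame, max_eq_left hpk]
    exact_mod_cast (by omega : k < k + p₂ - 1)
  · rw [Nat.cast_sub (by omega : 1 ≤ k + p₂), Nat.cast_add, Nat.cast_one]
    have hkq : (k : ℚ) ≠ 0 := Nat.cast_ne_zero.mpr (by omega)
    field_simp
    ring
  · have hpos : (0:ℚ) < ((p₂:ℚ) - 1) / (k:ℚ) := by
      apply div_pos
      · have h2' : (2:ℚ) ≤ (p₂:ℚ) := by exact_mod_cast (by omega : 2 ≤ p₂)
        linarith
      · exact_mod_cast (by omega : 0 < k)
    linarith
  · have h1 : ((p₂:ℚ) - 1) / (k:ℚ) < 1 := by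
      rw [div_lt_one (by exact_mod_cast (by omega : 0 < k))]
      have h2' : (p₂:ℚ) < (k:ℚ) + 1 := by exact_mod_cast (by omega : p₂ < k + 1)
      linarith
    linarith
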